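/- Let P be a (ε_k, 2)-uniform noisy sample of a compact set K. Let Q be the output of Declutter(P,k) and let P' = P ∩ ⋃_{q∈Q} B(q, C d_{P,k}(q)) with resampling constant C = 10 + 2√2. Then the Hausdorff distance satisfies δ_H(P', K) ≤ 8Cε_k + 7ε_k. -/

import Mathlib

open Metric

/-- Core loop of the Declutter algorithm: scan the (pre-sorted) list, keeping a point `p`
iff no previously kept point lies in the open ball `B(p, 2 f p)` (w.r.t. distance `d`). -/
noncomputable def declutterAux {X : Type*} (d : X → X → ℝ) (f : X → ℝ) :
    List X → List X → List X
  | Q, [] => Q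
  | Q, p :: rest =>
    if ∀ q ∈ Q, 2 * f p ≤ d p q then declutterAux d f (Q ++ [p]) rest
    else declutterAux d f Q rest

noncomputable def declutter {X : Type*} (d : X → X → ℝ) (f : X → ℝ) (L : List X) : List X :=
  declutterAux d f [] L

/-- `Q` is a possible output of the Declutter algorithm on `P`, with robust distance
function `f`: the points of `P` are processed in nondecreasing order of `f`
(ties broken arbitrarily). -/
def IsDeclutterOutput {X : Type*} (d : X → X → ℝ) (f : X → ℝ) (P : Finset X)
    (Q : List X) : Prop :=
  ∃ L : List X, L.Perm P.toList ∧ L.Pairwise (fun a b => f a ≤ f b) ∧ Q = declutter d f L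

variable {X : Type*} [MetricSpace X]

/-- Sorted (nondecreasing) list of distances from `x` to the points of `P`. -/
noncomputable def sortedDists (P : Finset X) (x : X) : List ℝ :=
  (P.val.map (dist x)).sort (· ≤ ·)

/-- The k-distance: root mean square of the distances to the k nearest neighbors in `P`. -/
noncomputable def kdist (P : Finset X) (k : ℕ) (x : X) : ℝ :=
  Real.sqrt ((1 / (k : ℝ)) * (((sortedDists P x).take k).map (fun r => r ^ 2)).sum)

/-- `P` is an ε_k-noisy sample of `K`:
(1) the k-distance is at most ε on `K`; (2) every point of the space is within
`kdist + ε` of `K`. -/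
def NoisySample (P : Finset X) (k : ℕ) (K : Set X) (ε : ℝ) : Prop :=
  (∀ x ∈ K, kdist P k x ≤ ε) ∧ ∀ x : X, infDist x K ≤ kdist P k x + ε


section ListLemmas

/-- In a sorted list, at least `i+1` elements are `≤` the `i`-th element. -/
lemma countP_ge_of_sorted (l : List ℝ) (hl : l.Pairwise (· ≤ ·)) {i : ℕ}
    (hi : i < l.length) {v : ℝ} (hv : l.getD i 0 ≤ v) :
    i + 1 ≤ l.countP (fun r => decide (r ≤ v)) := by
  have hsplit : l = l.take (i+1) ++ l.drop (i+1) := (List.take_append_drop _ _).symm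
  have hlen : (l.take (i+1)).length = i + 1 := by
    rw [List.length_take]; omega
  have hall : ∀ a ∈ l.take (i+1), a ≤ v := by
    intro a ha
    obtain ⟨j, hj, rfl⟩ := List.getElem_of_mem ha
    rw [List.getElem_take]
    have hj' : j < l.length := by rw [hlen] at hj; omega
    have : l[j] ≤ l[i] := by
      rcases Nat.lt_or_ge j i with h | h
      · exact (List.pairwise_iff_getElem.mp hl) j i hj' hi h
      · have : j = i := by rw [hlen] at hj; omega
        subst this; exact le_rfl
    calc l[j] ≤ l[i] := this
      _ = l.getD i 0 := (List.getD_eq_getElem l 0 hi).symm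
      _ ≤ v := hv
  have h1 : (l.take (i+1)).countP (fun r => decide (r ≤ v)) = i + 1 := by
    rw [List.countP_eq_length.mpr (by intro a ha; simpa using hall a ha), hlen]
  calc i + 1 = (l.take (i+1)).countP (fun r => decide (r ≤ v)) := h1.symm
    _ ≤ (l.take (i+1)).countP _ + (l.drop (i+1)).countP (fun r => decide (r ≤ v)) := Nat.le_add_right _ _
    _ = l.countP (fun r => decide (r ≤ v)) := by rw [← List.countP_append, ← hsplit]

lemma getD_le_of_countP (l : List ℝ) (hl : l.Pairwise (· ≤ ·)) {i : ℕ}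
    (hi : i < l.length) {v : ℝ}
    (h : i + 1 ≤ l.countP (fun r => decide (r ≤ v))) : l.getD i 0 ≤ v := by
  by_contra hlt
  push_neg at hlt
  have hsplit : l = l.take i ++ l.drop i := (List.take_append_drop _ _).symm
  have hdrop : (l.drop i).countP (fun r => decide (r ≤ v)) = 0 := by
    rw [List.countP_eq_zero]
    intro a ha
    obtain ⟨j, hj, rfl⟩ := List.getElem_of_mem ha
    rw [List.getElem_drop]
    have hij : i + j < l.length := by rw [List.length_drop] at hj; omega
    have : l[i] ≤ l[i+j] := by
      rcases Nat.eq_or_lt_of_le (Nat.le_add_right i j) with h' | h'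
      · simp [← h']
      · exact (List.pairwise_iff_getElem.mp hl) i (i+j) hi hij h'
    have : v < l[i+j] := lt_of_lt_of_le (by rwa [List.getD_eq_getElem l 0 hi] at hlt) this
    simpa using not_le.mpr this
  have : l.countP (fun r => decide (r ≤ v)) ≤ i := by
    calc l.countP _ = (l.take i).countP (fun r => decide (r ≤ v)) + (l.drop i).countP _ := by
          rw [← List.countP_append, ← hsplit]
      _ = (l.take i).countP _ := by rw [hdrop]; ring
      _ ≤ (l.take i).length := List.countP_le_length
      _ ≤ i := by rw [List.length_take]; omega
  omega

end ListLemmas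

lemma sortedDists_sorted (P : Finset X) (x : X) : (sortedDists P x).Pairwise (· ≤ ·) :=
  Multiset.pairwise_sort _ _

lemma sortedDists_length (P : Finset X) (x : X) : (sortedDists P x).length = P.card := by
  simp [sortedDists]

lemma sortedDists_coe (P : Finset X) (x : X) :
    (sortedDists P x : Multiset ℝ) = P.val.map (dist x) := Multiset.sort_eq _ _

lemma sortedDists_nonneg (P : Finset X) (x : X) {i : ℕ} (hi : i < (sortedDists P x).length) :
    0 ≤ (sortedDists P x).getD i 0 := by
  rw [List.getD_eq_getElem _ 0 hi]
  have hmem : (sortedDists P x)[i] ∈ (sortedDists P x) := List.getElem_mem _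
  have : (sortedDists P x)[i] ∈ (sortedDists P x : Multiset ℝ) := by simpa using hmem
  rw [sortedDists_coe] at this
  obtain ⟨p, -, hp⟩ := Multiset.mem_map.mp this
  rw [← hp]; exact dist_nonneg

/-- the i-th order statistic of distances is 1-Lipschitz in the base point. -/
lemma sortedDists_getD_le (P : Finset X) (x y : X) {i : ℕ} (hi : i < P.card) :
    (sortedDists P x).getD i 0 ≤ (sortedDists P y).getD i 0 + dist x y := by
  classical
  set v := (sortedDists P y).getD i 0 with hv
  have hiy : i < (sortedDists P y).length := by rw [sortedDists_length]; exact hi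
  have hix : i < (sortedDists P x).length := by rw [sortedDists_length]; exact hi
  have hcy : i + 1 ≤ (sortedDists P y).countP (fun r => decide (r ≤ v)) :=
    countP_ge_of_sorted _ (sortedDists_sorted P y) hiy le_rfl
  -- transfer count to the multiset and compare
  have hcy' : i + 1 ≤ Multiset.countP (fun r => r ≤ v) (P.val.map (dist y)) := by
    rw [← sortedDists_coe P y, Multiset.coe_countP]
    convert hcy using 2
  have hmono : Multiset.countP (fun r => r ≤ v) (P.val.map (dist y)) ≤
      Multiset.countP (fun r => r ≤ v + dist x y) (P.val.map (dist x)) := by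
    rw [Multiset.countP_map, Multiset.countP_map]
    apply Multiset.card_le_card
    apply Multiset.monotone_filter_right
    intro p hp
    calc dist x p ≤ dist x y + dist y p := dist_triangle _ _ _
      _ ≤ dist x y + v := by linarith
      _ = v + dist x y := by ring
  have hcx : i + 1 ≤ (sortedDists P x).countP (fun r => decide (r ≤ v + dist x y)) := by
    have := le_trans hcy' hmono
    rw [← sortedDists_coe P x, Multiset.coe_countP] at this
    convert this using 2
  exact getD_le_of_countP _ (sortedDists_sorted P x) hix hcx

lemma take_map_sq_sum (l : List ℝ) : ∀ m : ℕ, m ≤ l.length →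
    ((l.take m).map (fun r => r ^ 2)).sum = ∑ i ∈ Finset.range m, (l.getD i 0) ^ 2 := by
  intro m
  induction m with
  | zero => intro _; simp
  | succ m ih =>
    intro h
    have hm : m < l.length := h
    rw [Finset.sum_range_succ, ← ih (le_of_lt hm), List.take_succ,
      List.getElem?_eq_getElem hm, List.getD_eq_getElem l 0 hm,
      List.map_append, List.sum_append]
    simp

lemma kdist_eq_sum (P : Finset X) (k : ℕ) (hk : k ≤ P.card) (x : X) :
    kdist P k x =
      Real.sqrt ((1 / (k : ℝ)) * ∑ i ∈ Finset.range k, ((sortedDists P x).getD i 0) ^ 2) := by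
  rw [kdist, take_map_sq_sum _ k (by rw [sortedDists_length]; exact hk)]

lemma kdist_nonneg (P : Finset X) (k : ℕ) (x : X) : 0 ≤ kdist P k x := Real.sqrt_nonneg _

/-- The k-distance is 1-Lipschitz. -/
lemma kdist_lipschitz (P : Finset X) (k : ℕ) (hk1 : 1 ≤ k) (hk : k ≤ P.card) (x y : X) :
    kdist P k x ≤ kdist P k y + dist x y := by
  have hkpos : (0:ℝ) < k := by exact_mod_cast hk1
  set c := dist x y with hc
  have hc0 : 0 ≤ c := dist_nonneg
  set A : ℕ → ℝ := fun i => (sortedDists P x).getD i 0 with hA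
  set B : ℕ → ℝ := fun i => (sortedDists P y).getD i 0 with hB
  have hlenx : (sortedDists P x).length = P.card := sortedDists_length P x
  have hleny : (sortedDists P y).length = P.card := sortedDists_length P y
  have hA0 : ∀ i ∈ Finset.range k, 0 ≤ A i := fun i hi =>
    sortedDists_nonneg P x (by rw [hlenx]; exact lt_of_lt_of_le (Finset.mem_range.mp hi) hk)
  have hB0 : ∀ i ∈ Finset.range k, 0 ≤ B i := fun i hi =>
    sortedDists_nonneg P y (by rw [hleny]; exact lt_of_lt_of_le (Finset.mem_range.mp hi) hk)
  have hAB : ∀ i ∈ Finset.range k, A i ≤ B i + c := fun i hi =>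
    sortedDists_getD_le P x y (lt_of_lt_of_le (Finset.mem_range.mp hi) hk)
  rw [kdist_eq_sum P k hk x, kdist_eq_sum P k hk y]
  set s := Real.sqrt ((1 / (k : ℝ)) * ∑ i ∈ Finset.range k, B i ^ 2) with hs
  have hs0 : 0 ≤ s := Real.sqrt_nonneg _
  have hsum0 : 0 ≤ ∑ i ∈ Finset.range k, B i ^ 2 :=
    Finset.sum_nonneg fun i _ => sq_nonneg _
  have hs2 : s ^ 2 = (1 / (k : ℝ)) * ∑ i ∈ Finset.range k, B i ^ 2 := by
    rw [hs, Real.sq_sqrt (by positivity)]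
  -- mean ≤ RMS via Cauchy-Schwarz
  have hCS : (∑ i ∈ Finset.range k, B i) ^ 2 ≤ (k : ℝ) * ∑ i ∈ Finset.range k, B i ^ 2 := by
    have := sq_sum_le_card_mul_sum_sq (s := Finset.range k) (f := B)
    simpa using this
  have hB0' : 0 ≤ ∑ i ∈ Finset.range k, B i := Finset.sum_nonneg hB0
  have hmean : (1 / (k : ℝ)) * ∑ i ∈ Finset.range k, B i ≤ s := by
    rw [hs]
    rw [show (1 / (k:ℝ)) * ∑ i ∈ Finset.range k, B i
        = Real.sqrt (((1 / (k:ℝ)) * ∑ i ∈ Finset.range k, B i)^2) from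
      (Real.sqrt_sq (mul_nonneg (by positivity) hB0')).symm]
    apply Real.sqrt_le_sqrt
    rw [mul_pow]
    have h1 : (1/(k:ℝ))^2 * ((k:ℝ) * ∑ i ∈ Finset.range k, B i ^ 2)
        = (1/(k:ℝ)) * ∑ i ∈ Finset.range k, B i ^ 2 := by
      field_simp
    nlinarith [hCS, sq_nonneg (1/(k:ℝ))]
  have h1 : ∑ i ∈ Finset.range k, A i ^ 2 ≤ ∑ i ∈ Finset.range k, (B i + c) ^ 2 := by
    apply Finset.sum_le_sum
    intro i hi
    have h1 := hAB i hi
    have h2 := hA0 i hi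
    nlinarith
  have hexp : ∑ i ∈ Finset.range k, (B i + c) ^ 2
      = (∑ i ∈ Finset.range k, B i ^ 2) + 2 * c * (∑ i ∈ Finset.range k, B i)
        + (k : ℝ) * c ^ 2 := by
    rw [Finset.sum_congr rfl (fun i _ => add_sq (B i) c), Finset.sum_add_distrib,
      Finset.sum_add_distrib, Finset.sum_const, Finset.card_range]
    rw [show ∑ i ∈ Finset.range k, 2 * B i * c = 2 * c * ∑ i ∈ Finset.range k, B i by
      rw [Finset.mul_sum]; exact Finset.sum_congr rfl (fun i _ => by ring)]
    push_cast
    ring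
  have h2 : (1 / (k : ℝ)) * ∑ i ∈ Finset.range k, (B i + c) ^ 2 ≤ (s + c) ^ 2 := by
    rw [hexp]
    have heq : (1 / (k : ℝ)) * ((∑ i ∈ Finset.range k, B i ^ 2)
        + 2 * c * (∑ i ∈ Finset.range k, B i) + (k : ℝ) * c ^ 2)
        = s ^ 2 + 2 * c * ((1 / (k : ℝ)) * ∑ i ∈ Finset.range k, B i) + c ^ 2 := by
      rw [hs2]; field_simp
    rw [heq]
    nlinarith [hmean, hc0, hs0]
  rw [show s + c = Real.sqrt ((s + c) ^ 2) from (Real.sqrt_sq (by positivity)).symm]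
  apply Real.sqrt_le_sqrt
  calc (1 / (k : ℝ)) * ∑ i ∈ Finset.range k, A i ^ 2
      ≤ (1 / (k : ℝ)) * ∑ i ∈ Finset.range k, (B i + c) ^ 2 :=
        mul_le_mul_of_nonneg_left h1 (by positivity)
    _ ≤ (s + c) ^ 2 := h2

/-- Every point has a sample point within distance `kdist`. -/
lemma exists_near (P : Finset X) (k : ℕ) (hk1 : 1 ≤ k) (hk : k ≤ P.card) (x : X) :
    ∃ p ∈ P, dist x p ≤ kdist P k x := by
  have hkpos : (0:ℝ) < k := by exact_mod_cast hk1
  have hlen : (sortedDists P x).length = P.card := sortedDists_length P x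
  have h0 : 0 < (sortedDists P x).length := by rw [hlen]; omega
  set r0 := (sortedDists P x).getD 0 0 with hr0
  have hr00 : 0 ≤ r0 := sortedDists_nonneg P x h0
  have hterm : ∀ i ∈ Finset.range k, r0 ^ 2 ≤ ((sortedDists P x).getD i 0) ^ 2 := by
    intro i hi
    have hi' : i < (sortedDists P x).length := by
      rw [hlen]; exact lt_of_lt_of_le (Finset.mem_range.mp hi) hk
    have : r0 ≤ (sortedDists P x).getD i 0 := by
      rw [hr0, List.getD_eq_getElem _ 0 h0, List.getD_eq_getElem _ 0 hi']
      rcases Nat.eq_zero_or_pos i with h | h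
      · subst h; exact le_rfl
      · exact (List.pairwise_iff_getElem.mp (sortedDists_sorted P x)) 0 i h0 hi' h
    nlinarith
  have hsum : (k : ℝ) * r0 ^ 2 ≤ ∑ i ∈ Finset.range k, ((sortedDists P x).getD i 0) ^ 2 := by
    calc (k : ℝ) * r0 ^ 2 = ∑ _i ∈ Finset.range k, r0 ^ 2 := by
          rw [Finset.sum_const, Finset.card_range]; ring
      _ ≤ _ := Finset.sum_le_sum hterm
  have hle : r0 ≤ kdist P k x := by
    rw [kdist_eq_sum P k hk x,
      show r0 = Real.sqrt (r0 ^ 2) from (Real.sqrt_sq hr00).symm]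
    apply Real.sqrt_le_sqrt
    rw [show r0 ^ 2 = (1 / (k:ℝ)) * ((k:ℝ) * r0 ^ 2) by field_simp]
    exact mul_le_mul_of_nonneg_left hsum (by positivity)
  have hmem : r0 ∈ (sortedDists P x) := by
    rw [hr0, List.getD_eq_getElem _ 0 h0]
    exact List.getElem_mem _
  have : r0 ∈ (P.val.map (dist x)) := by
    rw [← sortedDists_coe P x]; exact_mod_cast hmem
  obtain ⟨p, hp, hpd⟩ := Multiset.mem_map.mp this
  exact ⟨p, hp, by rw [hpd]; exact hle⟩

section Declutter

variable {Y : Type*} (d : Y → Y → ℝ) (f : Y → ℝ)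

lemma declutterAux_nil (Q : List Y) : declutterAux d f Q [] = Q := by
  rw [declutterAux]

lemma declutterAux_cons (Q : List Y) (p : Y) (rest : List Y) :
    declutterAux d f Q (p :: rest) =
      if ∀ q ∈ Q, 2 * f p ≤ d p q then declutterAux d f (Q ++ [p]) rest
      else declutterAux d f Q rest := by
  rw [declutterAux]

/-- the accumulator survives to the output -/
lemma mem_declutterAux_of_mem {Q : List Y} {q : Y} (hq : q ∈ Q) (L : List Y) :
    q ∈ declutterAux d f Q L := by
  induction L generalizing Q with
  | nil => rw [declutterAux_nil]; exact hq
  | cons p rest ih =>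
    rw [declutterAux_cons]
    split_ifs with h
    · exact ih (List.mem_append_left _ hq)
    · exact ih hq

lemma declutterAux_subset {L Q : List Y} {q : Y} (hq : q ∈ declutterAux d f Q L) :
    q ∈ Q ∨ q ∈ L := by
  induction L generalizing Q with
  | nil => rw [declutterAux_nil] at hq; exact Or.inl hq
  | cons p rest ih =>
    rw [declutterAux_cons] at hq
    split_ifs at hq with h
    · rcases ih hq with h' | h'
      · rcases List.mem_append.mp h' with h'' | h''
        · exact Or.inl h''
        · simp only [List.mem_singleton] at h''
          exact Or.inr (h'' ▸ (List.mem_cons_self (a := p) (l := rest)))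
      · exact Or.inr (List.mem_cons_of_mem _ h')
    · rcases ih hq with h' | h'
      · exact Or.inl h'
      · exact Or.inr (List.mem_cons_of_mem _ h')

/-- invariant: the output is pairwise `T`, where `T a b` records both the processing
order (`f a ≤ f b`) and the separation condition (`2 f b ≤ d b a`). -/
lemma declutterAux_pairwise {L Q : List Y}
    (hL : L.Pairwise (fun a b => f a ≤ f b))
    (hQ : Q.Pairwise (fun a b => f a ≤ f b ∧ 2 * f b ≤ d b a))
    (hQL : ∀ q ∈ Q, ∀ p ∈ L, f q ≤ f p) :
    (declutterAux d f Q L).Pairwise (fun a b => f a ≤ f b ∧ 2 * f b ≤ d b a) := by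
  induction L generalizing Q with
  | nil => rw [declutterAux_nil]; exact hQ
  | cons p rest ih =>
    have hrest : rest.Pairwise (fun a b => f a ≤ f b) := hL.of_cons
    rw [declutterAux_cons]
    split_ifs with h
    · apply ih hrest
      · rw [List.pairwise_append]
        refine ⟨hQ, List.pairwise_singleton _ _, ?_⟩
        intro a ha b hb
        simp only [List.mem_singleton] at hb
        subst hb
        exact ⟨hQL a ha _ (List.mem_cons_self), h a ha⟩
      · intro q hq r hr
        rcases List.mem_append.mp hq with h' | h'
        · exact hQL q h' r (List.mem_cons_of_mem _ hr)
        · simp only [List.mem_singleton] at h'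
          subst h'
          exact (List.pairwise_cons.mp hL).1 r hr
    · apply ih hrest hQ
      intro q hq r hr
      exact hQL q hq r (List.mem_cons_of_mem _ hr)

/-- every processed point has a kept point nearby, which moreover was processed no later. -/
lemma declutterAux_cover (hd : ∀ a, d a a = 0) (hf : ∀ p, 0 ≤ f p) {L Q : List Y}
    (hL : L.Pairwise (fun a b => f a ≤ f b))
    (hQL : ∀ q ∈ Q, ∀ p ∈ L, f q ≤ f p)
    {p : Y} (hp : p ∈ L) :
    ∃ q ∈ declutterAux d f Q L, d p q ≤ 2 * f p ∧ f q ≤ f p := by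
  induction L generalizing Q with
  | nil => exact absurd hp List.not_mem_nil
  | cons a rest ih =>
    have hrest : rest.Pairwise (fun a b => f a ≤ f b) := hL.of_cons
    rw [declutterAux_cons]
    rcases List.mem_cons.mp hp with rfl | hp'
    · split_ifs with h
      · refine ⟨p, mem_declutterAux_of_mem d f (List.mem_append_right _ (List.mem_singleton_self p)) _, ?_, le_rfl⟩
        rw [hd p]
        have := hf p
        linarith
      · push_neg at h
        obtain ⟨q, hqQ, hqd⟩ := h
        exact ⟨q, mem_declutterAux_of_mem d f hqQ _, le_of_lt hqd,
          hQL q hqQ p (List.mem_cons_self)⟩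
    · split_ifs with h
      · apply ih hrest ?_ hp'
        intro q hq r hr
        rcases List.mem_append.mp hq with h' | h'
        · exact hQL q h' r (List.mem_cons_of_mem _ hr)
        · simp only [List.mem_singleton] at h'
          subst h'
          exact (List.pairwise_cons.mp hL).1 r hr
      · apply ih hrest ?_ hp'
        intro q hq r hr
        exact hQL q hq r (List.mem_cons_of_mem _ hr)

lemma pairwise_two_mem {T : Y → Y → Prop} {l : List Y} (h : l.Pairwise T)
    {a b : Y} (ha : a ∈ l) (hb : b ∈ l) : a = b ∨ T a b ∨ T b a := by
  induction l with
  | nil => exact absurd ha List.not_mem_nil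
  | cons c t ih =>
    rcases List.pairwise_cons.mp h with ⟨hc, ht⟩
    rcases List.mem_cons.mp ha with rfl | ha'
    · rcases List.mem_cons.mp hb with rfl | hb'
      · exact Or.inl rfl
      · exact Or.inr (Or.inl (hc b hb'))
    · rcases List.mem_cons.mp hb with rfl | hb'
      · exact Or.inr (Or.inr (hc a ha'))
      · exact ih ht ha' hb'

end Declutter

/-- One declutter-resample step on a (ε_k,2)-uniform noisy sample removes all outliers:
the resampled set P' is within Hausdorff distance 8Cε + 7ε of K, where C = 10 + 2√2. -/
theorem resample_removes_outliers (P : Finset X) (k : ℕ) (hk : 1 ≤ k)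
    (hkP : k ≤ P.card) (K : Set X) (hK : IsCompact K) (hKne : K.Nonempty)
    (ε : ℝ) (hsample : NoisySample P k K ε)
    (hunif : ∀ p ∈ P, ε / 2 ≤ kdist P k p)
    (Q : List X) (hQ : IsDeclutterOutput (fun a b => dist a b) (kdist P k) P Q) :
    hausdorffDist
      {p | p ∈ P ∧ ∃ q ∈ Q, dist p q ≤ (10 + 2 * Real.sqrt 2) * kdist P k q} K
      ≤ 8 * (10 + 2 * Real.sqrt 2) * ε + 7 * ε := by
  classical
  obtain ⟨L, hperm, hsorted, hQdef⟩ := hQ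
  have hC0 : (0:ℝ) ≤ 10 + 2 * Real.sqrt 2 := by positivity
  have hmemL : ∀ p : X, p ∈ L ↔ p ∈ P := fun p => by
    rw [hperm.mem_iff, Finset.mem_toList]
  have hε0 : 0 ≤ ε := by
    obtain ⟨x, hx⟩ := hKne
    exact le_trans (kdist_nonneg P k x) (hsample.1 x hx)
  have hcover : ∀ p ∈ P, ∃ q ∈ Q, dist p q ≤ 2 * kdist P k p ∧ kdist P k q ≤ kdist P k p := by
    intro p hp
    rw [hQdef]
    exact declutterAux_cover _ _ (fun a => dist_self a) (fun a => kdist_nonneg P k a)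
      hsorted (fun q hq => absurd hq List.not_mem_nil) ((hmemL p).mpr hp)
  have hQP : ∀ q ∈ Q, q ∈ P := by
    intro q hq
    rw [hQdef] at hq
    rcases declutterAux_subset _ _ hq with h | h
    · exact absurd h List.not_mem_nil
    · exact (hmemL q).mp h
  have hpair : Q.Pairwise
      (fun a b => kdist P k a ≤ kdist P k b ∧ 2 * kdist P k b ≤ dist b a) := by
    rw [hQdef]
    exact declutterAux_pairwise _ _ hsorted List.Pairwise.nil
      (fun q hq => absurd hq List.not_mem_nil)
  have hkey : ∀ q ∈ Q, kdist P k q ≤ 6 * ε := by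
    intro q hq
    by_contra hgt
    push_neg at hgt
    have h2ε : 2 * ε < kdist P k q := by linarith
    obtain ⟨x, hxK, hxd⟩ := hK.exists_infDist_eq_dist hKne q
    obtain ⟨p, hpP, hpd⟩ := exists_near P k hk hkP x
    have hpd' : dist x p ≤ ε := le_trans hpd (hsample.1 x hxK)
    have hpx : dist p x ≤ ε := by rw [dist_comm]; exact hpd'
    have hfp : kdist P k p ≤ 2 * ε := by
      linarith [kdist_lipschitz P k hk hkP p x, hsample.1 x hxK]
    obtain ⟨q', hq'Q, hq'd, hq'f⟩ := hcover p hpP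
    have hne : kdist P k q' < kdist P k q := lt_of_le_of_lt (le_trans hq'f hfp) h2ε
    have hT : 2 * kdist P k q ≤ dist q q' := by
      rcases pairwise_two_mem hpair hq'Q hq with h | h | h
      · rw [h] at hne; exact absurd hne (lt_irrefl _)
      · exact h.2
      · linarith [h.1]
    have hdq : dist q q' ≤ infDist q K + 5 * ε := by
      have h4 : dist p q' ≤ 4 * ε := by linarith
      calc dist q q' ≤ dist q x + dist x p + dist p q' := dist_triangle4 q x p q'
        _ ≤ infDist q K + ε + 4 * ε := by rw [← hxd] at *; linarith
        _ = infDist q K + 5 * ε := by ring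
    have hinf : infDist q K ≤ kdist P k q + ε := hsample.2 q
    linarith
  have hQK : ∀ q ∈ Q, infDist q K ≤ 7 * ε := fun q hq =>
    le_trans (hsample.2 q) (by linarith [hkey q hq])
  have hr0 : (0:ℝ) ≤ 8 * (10 + 2 * Real.sqrt 2) * ε + 7 * ε := by
    have : 0 ≤ 8 * (10 + 2 * Real.sqrt 2) * ε := by positivity
    linarith
  apply hausdorffDist_le_of_mem_dist hr0
  · rintro x ⟨hxP, q, hqQ, hxq⟩
    obtain ⟨y, hyK, hyd⟩ := hK.exists_infDist_eq_dist hKne x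
    refine ⟨y, hyK, ?_⟩
    rw [← hyd]
    have h1 : infDist x K ≤ infDist q K + dist x q := infDist_le_infDist_add_dist
    have h2 : dist x q ≤ (10 + 2 * Real.sqrt 2) * (6 * ε) :=
      le_trans hxq (mul_le_mul_of_nonneg_left (hkey q hqQ) hC0)
    have h3 := hQK q hqQ
    nlinarith [hC0, hε0]
  · intro x hxK
    obtain ⟨p, hpP, hpd⟩ := exists_near P k hk hkP x
    have hpd' : dist x p ≤ ε := le_trans hpd (hsample.1 x hxK)
    have hpx : dist p x ≤ ε := by rw [dist_comm]; exact hpd'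
    have hfp : kdist P k p ≤ 2 * ε := by
      linarith [kdist_lipschitz P k hk hkP p x, hsample.1 x hxK]
    obtain ⟨q, hqQ, hqd, hqf⟩ := hcover p hpP
    refine ⟨q, ⟨hQP q hqQ, q, hqQ, ?_⟩, ?_⟩
    · rw [dist_self]
      exact mul_nonneg hC0 (kdist_nonneg P k q)
    · calc dist x q ≤ dist x p + dist p q := dist_triangle x p q
        _ ≤ ε + 4 * ε := by linarith
        _ ≤ 8 * (10 + 2 * Real.sqrt 2) * ε + 7 * ε := by nlinarith [hC0, hε0]
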